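/- Let β ≥ 1, 0 < R' < R, ν > 0, τ > 0, ω ∈ ℝ and α ∈ ℝ^d, and assume the Diophantine condition |ω(α·k) − 2πn| ≥ ν |k|_1^{−τ} for all k ∈ ℤ^d∖{0} and all n ∈ ℤ. Let η : ℤ^d → ℂ satisfy η_0 = 0 and N_η := ∑_{k∈ℤ^d} e^{βR|k|_β}|η_k| < ∞. Define φ_0 := 0 and φ_k := η_k/(e^{i ω(α·k)} − 1) for k ≠ 0 (these are the Fourier coefficients of the unique zero-average solution φ of the cohomology equation φ(σ+ωα) − φ(σ) = η(σ)). Then ∑_{k∈ℤ^d} e^{βR'|k|_β}|φ_k| ≤ (π/2) · τ^{τβ} · e^{−τβ} · ν^{−1} · (R − R')^{−τβ} · N_η. -/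

import Mathlib

/-- For `k ∈ ℤ^d` and `β ≥ 1`, the quantity `|k|_β := ∑ i, |k_i|^(1/β)`. -/
noncomputable def znormBeta {d : ℕ} (β : ℝ) (k : Fin d → ℤ) : ℝ :=
  ∑ i, |(k i : ℝ)| ^ (1 / β)

/-- `x^s e^{-cx} ≤ (s/c)^s e^{-s}` for `x ≥ 0`, `s, c > 0`. -/
lemma aux_rpow_mul_exp_le {x s c : ℝ} (hx : 0 ≤ x) (hs : 0 < s) (hc : 0 < c) :
    x ^ s * Real.exp (-(c * x)) ≤ (s / c) ^ s * Real.exp (-s) := by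
  rcases eq_or_lt_of_le hx with h | hx'
  · rw [← h, Real.zero_rpow hs.ne', zero_mul]
    positivity
  · have hsc : 0 < s / c := div_pos hs hc
    rw [Real.rpow_def_of_pos hx', Real.rpow_def_of_pos hsc, ← Real.exp_add, ← Real.exp_add]
    apply Real.exp_le_exp.2
    have h1 : Real.log (c * x / s) ≤ c * x / s - 1 :=
      Real.log_le_sub_one_of_pos (by positivity)
    have h2 : Real.log (c * x / s) = Real.log x - Real.log (s / c) := by
      rw [Real.log_div (by positivity) hs.ne', Real.log_mul hc.ne' hx'.ne',
        Real.log_div hs.ne' hc.ne']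
      ring
    rw [h2] at h1
    have := mul_le_mul_of_nonneg_left h1 hs.le
    rw [mul_div_assoc] at this
    have h3 : s * (c * x / s) = c * x := by field_simp
    nlinarith [this]

/-- norm of `e^{iθ} - 1`. -/
lemma aux_norm_exp_I_sub_one (θ : ℝ) :
    ‖Complex.exp (Complex.I * θ) - 1‖ = 2 * |Real.sin (θ / 2)| := by
  have key : Complex.exp (Complex.I * θ) - 1 =
      Complex.exp (Complex.I * ((θ / 2 : ℝ) : ℂ)) *
        (2 * Complex.sin ((θ / 2 : ℝ) : ℂ) * Complex.I) := by
    rw [Complex.sin]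
    push_cast
    rw [show -(↑θ / 2 : ℂ) * Complex.I = -(Complex.I * (↑θ / 2)) by ring,
      show (↑θ / 2 : ℂ) * Complex.I = Complex.I * (↑θ / 2) by ring]
    set a : ℂ := Complex.I * (↑θ / 2) with ha
    have e1 : Complex.exp (Complex.I * θ) = Complex.exp a * Complex.exp a := by
      rw [← Complex.exp_add, ha]; ring_nf
    have e2 : Complex.exp a * Complex.exp (-a) = 1 := by
      rw [← Complex.exp_add]; simp
    have e3 : Complex.I * Complex.I = -1 := Complex.I_mul_I
    linear_combination e1 + e2 - Complex.exp a * (Complex.exp (-a) - Complex.exp a) * e3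
  rw [key, show Complex.I * ((θ/2 : ℝ) : ℂ) = ((θ/2 : ℝ) : ℂ) * Complex.I by ring,
    ← Complex.ofReal_sin]
  simp only [norm_mul, Complex.norm_exp_ofReal_mul_I,
    Complex.norm_real, Real.norm_eq_abs, Complex.norm_I, RCLike.norm_ofNat]
  ring

/-- Lower bound on `‖e^{iθ}-1‖` from a lower bound on distance to `2πℤ`. -/
lemma aux_norm_exp_I_sub_one_ge {θ ε : ℝ} (h : ∀ n : ℤ, ε ≤ |θ - 2 * Real.pi * n|) :
    2 / Real.pi * ε ≤ ‖Complex.exp (Complex.I * θ) - 1‖ := by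
  set n : ℤ := round (θ / (2 * Real.pi)) with hn
  have hπ := Real.pi_pos
  have hb : |θ - 2 * Real.pi * n| ≤ Real.pi := by
    have := abs_sub_round (θ / (2 * Real.pi))
    have h2 : θ - 2 * Real.pi * n = 2 * Real.pi * (θ / (2 * Real.pi) - n) := by
      field_simp
    rw [h2, abs_mul, abs_of_pos (by positivity : (0:ℝ) < 2 * Real.pi)]
    nlinarith
  rw [aux_norm_exp_I_sub_one]
  have hsin : |Real.sin (θ / 2)| = |Real.sin (θ / 2 - n * Real.pi)| := by
    have hs := Real.sin_add_int_mul_pi (θ / 2 - n * Real.pi) n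
    rw [sub_add_cancel] at hs
    rcases Int.even_or_odd n with he | ho
    · rw [hs, he.neg_one_zpow, one_mul]
    · rw [hs, ho.neg_one_zpow, neg_one_mul, abs_neg]
  have habs : |θ / 2 - n * Real.pi| ≤ Real.pi / 2 := by
    rw [show θ / 2 - n * Real.pi = (θ - 2 * Real.pi * n) / 2 by ring, abs_div,
      abs_of_pos (by norm_num : (0:ℝ) < 2)]
    linarith
  have hj := Real.mul_abs_le_abs_sin habs
  have hε : ε ≤ |θ - 2 * Real.pi * n| := h n
  rw [hsin]
  have heq : |θ / 2 - n * Real.pi| = |θ - 2 * Real.pi * n| / 2 := by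
    rw [show θ / 2 - n * Real.pi = (θ - 2 * Real.pi * n) / 2 by ring, abs_div,
      abs_of_pos (by norm_num : (0:ℝ) < 2)]
  rw [heq] at hj
  have h4 : 2 / Real.pi * ε ≤ 2 / Real.pi * |θ - 2 * Real.pi * n| :=
    mul_le_mul_of_nonneg_left hε (by positivity)
  calc 2 / Real.pi * ε ≤ 2 / Real.pi * |θ - 2 * Real.pi * n| := h4
    _ = 2 * (2 / Real.pi * (|θ - 2 * Real.pi * n| / 2)) := by ring
    _ ≤ 2 * |Real.sin (θ / 2 - n * Real.pi)| := by linarith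

lemma aux_one_le_l1 {d : ℕ} {k : Fin d → ℤ} (hk : k ≠ 0) :
    1 ≤ ∑ i, |(k i : ℝ)| := by
  obtain ⟨i, hi⟩ := Function.ne_iff.1 hk
  have h1 : (1 : ℤ) ≤ |k i| := Int.one_le_abs (by simpa using hi)
  calc (1:ℝ) ≤ |(k i : ℝ)| := by exact_mod_cast h1
    _ ≤ ∑ j, |(k j : ℝ)| :=
      Finset.single_le_sum (f := fun j => |(k j : ℝ)|) (fun j _ => abs_nonneg _)
        (Finset.mem_univ i)

lemma aux_one_le_znorm {d : ℕ} {β : ℝ} (hβ : 1 ≤ β) {k : Fin d → ℤ} (hk : k ≠ 0) :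
    1 ≤ znormBeta β k := by
  obtain ⟨i, hi⟩ := Function.ne_iff.1 hk
  have h1 : (1 : ℤ) ≤ |k i| := Int.one_le_abs (by simpa using hi)
  have h1' : (1:ℝ) ≤ |(k i : ℝ)| := by exact_mod_cast h1
  calc (1:ℝ) ≤ |(k i : ℝ)| ^ (1/β) :=
        Real.one_le_rpow h1' (by positivity)
    _ ≤ znormBeta β k := by
      rw [znormBeta]
      exact Finset.single_le_sum (f := fun j => |(k j : ℝ)| ^ (1/β))
        (fun j _ => Real.rpow_nonneg (abs_nonneg _) _) (Finset.mem_univ i)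

lemma aux_l1_le_rpow {d : ℕ} {β : ℝ} (hβ : 1 ≤ β) {k : Fin d → ℤ} (hk : k ≠ 0) :
    (∑ i, |(k i : ℝ)|) ≤ znormBeta β k ^ β := by
  have hβ0 : (0:ℝ) < β := by linarith
  set S := znormBeta β k with hS
  have hS1 : 1 ≤ S := aux_one_le_znorm hβ hk
  have hS0 : 0 < S := by linarith
  have hterm : ∀ i, |(k i : ℝ)| ≤ |(k i : ℝ)| ^ (1/β) * S ^ (β - 1) := by
    intro i
    set a := |(k i : ℝ)| with haa
    have ha : 0 ≤ a := abs_nonneg _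
    rcases eq_or_lt_of_le ha with h0 | hpos
    · rw [← h0, Real.zero_rpow (by positivity : (1/β) ≠ 0), zero_mul]
    · have hle : a ^ (1/β) ≤ S := by
        rw [hS, znormBeta, haa]
        exact Finset.single_le_sum (f := fun j => |(k j : ℝ)| ^ (1/β))
          (fun j _ => Real.rpow_nonneg (abs_nonneg _) _) (Finset.mem_univ i)
      have hkey : a ^ (1/β) * (a ^ (1/β)) ^ (β - 1) = a := by
        rw [← Real.rpow_mul ha, ← Real.rpow_add hpos,
          show 1/β + 1/β*(β-1) = 1 by field_simp; ring]
        exact Real.rpow_one a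
      calc a = a ^ (1/β) * (a ^ (1/β)) ^ (β - 1) := hkey.symm
        _ ≤ a ^ (1/β) * S ^ (β - 1) :=
          mul_le_mul_of_nonneg_left
            (Real.rpow_le_rpow (Real.rpow_nonneg ha _) hle (by linarith))
            (Real.rpow_nonneg ha _)
  calc (∑ i, |(k i : ℝ)|) ≤ ∑ i, |(k i : ℝ)| ^ (1/β) * S ^ (β - 1) :=
        Finset.sum_le_sum (fun i _ => hterm i)
    _ = S * S ^ (β - 1) := by rw [← Finset.sum_mul, hS, znormBeta]
    _ = S ^ β := by
        rw [show S * S ^ (β-1) = S ^ (1:ℝ) * S ^ (β-1) by rw [Real.rpow_one],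
          ← Real.rpow_add hS0]
        ring_nf

/-- Solution of the cohomology equation: under the Diophantine condition
`|ω(α·k) - 2πn| ≥ ν|k|₁^{-τ}`, the Fourier coefficients
`φ_k = η_k/(e^{iω(α·k)} - 1)` (with `φ_0 = 0`) of the unique zero-average
solution of `φ(σ+ωα) - φ(σ) = η(σ)` satisfy
`∑_k e^{βR'|k|_β}|φ_k| ≤ (π/2) τ^{τβ} e^{-τβ} ν^{-1} (R-R')^{-τβ} ∑_k e^{βR|k|_β}|η_k|`. -/
theorem cohomology_equation_estimate (d : ℕ) (hd : 1 ≤ d) (β R R' ν τ : ℝ)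
    (hβ : 1 ≤ β) (hR' : 0 < R') (hRR : R' < R) (hν : 0 < ν) (hτ : 0 < τ)
    (ω : ℝ) (α : Fin d → ℝ)
    (hdio : ∀ k : Fin d → ℤ, k ≠ 0 → ∀ n : ℤ,
      ν * (∑ i, |(k i : ℝ)|) ^ (-τ) ≤ |ω * (∑ i, α i * (k i : ℝ)) - 2 * Real.pi * n|)
    (η : (Fin d → ℤ) → ℂ) (hη0 : η 0 = 0)
    (hη : Summable fun k => Real.exp (β * R * znormBeta β k) * ‖η k‖)
    (φ : (Fin d → ℤ) → ℂ)
    (hφ : ∀ k : Fin d → ℤ, φ k = if k = 0 then 0 else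
      η k / (Complex.exp (Complex.I * ((ω * ∑ i, α i * (k i : ℝ) : ℝ) : ℂ)) - 1)) :
    Summable (fun k => Real.exp (β * R' * znormBeta β k) * ‖φ k‖) ∧
    (∑' k : Fin d → ℤ, Real.exp (β * R' * znormBeta β k) * ‖φ k‖) ≤
      (Real.pi / 2) * τ ^ (τ * β) * Real.exp (-(τ * β)) * ν⁻¹ * (R - R') ^ (-(τ * β)) *
        ∑' k : Fin d → ℤ, Real.exp (β * R * znormBeta β k) * ‖η k‖ := by
  have hπ := Real.pi_pos
  have hsub : 0 < R - R' := by linarith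
  have hβ0 : (0:ℝ) < β := by linarith
  set C : ℝ := (Real.pi / 2) * τ ^ (τ * β) * Real.exp (-(τ * β)) * ν⁻¹ *
    (R - R') ^ (-(τ * β)) with hC
  have hC0 : 0 ≤ C := by
    apply mul_nonneg
    apply mul_nonneg
    apply mul_nonneg
    apply mul_nonneg
    · positivity
    · exact Real.rpow_nonneg hτ.le _
    · exact Real.exp_nonneg _
    · exact inv_nonneg.2 hν.le
    · exact Real.rpow_nonneg hsub.le _
  have key : ∀ k : Fin d → ℤ, Real.exp (β * R' * znormBeta β k) * ‖φ k‖ ≤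
      C * (Real.exp (β * R * znormBeta β k) * ‖η k‖) := by
    intro k
    by_cases hk : k = 0
    · subst hk
      simp [hφ 0, hη0]
    · set B := znormBeta β k with hB
      set L1 : ℝ := ∑ i, |(k i : ℝ)| with hL1
      set θ : ℝ := ω * ∑ i, α i * (k i : ℝ) with hθ
      have hL1one : 1 ≤ L1 := aux_one_le_l1 hk
      have hL1pos : 0 < L1 := by linarith
      have hBone : 1 ≤ B := aux_one_le_znorm hβ hk
      have hB0 : (0:ℝ) ≤ B := by linarith
      have hLτ : 0 < L1 ^ τ := Real.rpow_pos_of_pos hL1pos τ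
      -- lower bound on the denominator
      have hD : 2 / Real.pi * (ν * L1 ^ (-τ)) ≤
          ‖Complex.exp (Complex.I * (θ : ℂ)) - 1‖ :=
        aux_norm_exp_I_sub_one_ge (hdio k hk)
      have hDpos : 0 < ‖Complex.exp (Complex.I * (θ : ℂ)) - 1‖ :=
        lt_of_lt_of_le (by positivity) hD
      -- bound on ‖φ k‖
      have hφb : ‖φ k‖ ≤ Real.pi / 2 * ν⁻¹ * L1 ^ τ * ‖η k‖ := by
        rw [hφ k, if_neg hk, norm_div]
        have h1 : ‖η k‖ / ‖Complex.exp (Complex.I * (θ : ℂ)) - 1‖ ≤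
            ‖η k‖ / (2 / Real.pi * (ν * L1 ^ (-τ))) :=
          div_le_div_of_nonneg_left (norm_nonneg _) (by positivity) hD
        refine h1.trans (le_of_eq ?_)
        rw [Real.rpow_neg hL1pos.le]
        field_simp
      -- bound L1^τ by B^(τ*β)
      have hL1B : L1 ^ τ ≤ B ^ (τ * β) := by
        calc L1 ^ τ ≤ (B ^ β) ^ τ :=
              Real.rpow_le_rpow hL1pos.le (aux_l1_le_rpow hβ hk) hτ.le
          _ = B ^ (τ * β) := by
              rw [← Real.rpow_mul hB0, mul_comm]
      -- main chain
      have hexp : Real.exp (β * R' * B) =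
          Real.exp (β * R * B) * Real.exp (-(β * (R - R') * B)) := by
        rw [← Real.exp_add]; ring_nf
      have hpow : (τ * β / (β * (R - R'))) ^ (τ * β) =
          τ ^ (τ * β) * (R - R') ^ (-(τ * β)) := by
        rw [show τ * β / (β * (R - R')) = τ / (R - R') by
              field_simp,
          Real.div_rpow hτ.le hsub.le, Real.rpow_neg hsub.le, div_eq_mul_inv]
      calc Real.exp (β * R' * B) * ‖φ k‖
          ≤ Real.exp (β * R' * B) * (Real.pi / 2 * ν⁻¹ * L1 ^ τ * ‖η k‖) :=
            mul_le_mul_of_nonneg_left hφb (Real.exp_nonneg _)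
        _ ≤ Real.exp (β * R' * B) * (Real.pi / 2 * ν⁻¹ * B ^ (τ * β) * ‖η k‖) := by
            gcongr
        _ = Real.pi / 2 * ν⁻¹ * (B ^ (τ * β) * Real.exp (-(β * (R - R') * B))) *
              (Real.exp (β * R * B) * ‖η k‖) := by
            rw [hexp]; ring
        _ ≤ Real.pi / 2 * ν⁻¹ *
              ((τ * β / (β * (R - R'))) ^ (τ * β) * Real.exp (-(τ * β))) *
              (Real.exp (β * R * B) * ‖η k‖) := by
            apply mul_le_mul_of_nonneg_right
            apply mul_le_mul_of_nonneg_left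
            · exact aux_rpow_mul_exp_le hB0 (by positivity) (by positivity)
            · positivity
            · positivity
        _ = C * (Real.exp (β * R * B) * ‖η k‖) := by
            rw [hC, hpow]; ring
  have hsum : Summable (fun k => Real.exp (β * R' * znormBeta β k) * ‖φ k‖) :=
    Summable.of_nonneg_of_le (fun k => by positivity) key (hη.mul_left C)
  refine ⟨hsum, ?_⟩
  calc (∑' k : Fin d → ℤ, Real.exp (β * R' * znormBeta β k) * ‖φ k‖)
      ≤ ∑' k : Fin d → ℤ, C * (Real.exp (β * R * znormBeta β k) * ‖η k‖) :=
        Summable.tsum_le_tsum key hsum (hη.mul_left C)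
    _ = C * ∑' k : Fin d → ℤ, Real.exp (β * R * znormBeta β k) * ‖η k‖ :=
        tsum_mul_left
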